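/- Let f, g ∈ Homeo⁺(S¹) have rational rotation numbers and suppose Per(f) ∩ Per(g) = ∅. Then the set S¹ ∖ (Per(f) ∪ Per(g)) contains only finitely many connected components bounded on one side by a point of Per(f) and on the other side by a point of Per(g); moreover the number of components of type (f,g) (left endpoint in Per(f), right endpoint in Per(g)) equals the number of components of type (g,f), and these alternate around the circle. -/

import Mathlib

open Set Function Filter MeasureTheory

/-- An orientation-preserving homeomorphism of `ℝ` commuting with `x ↦ x + 1`,
i.e. a lift of an orientation-preserving circle homeomorphism. -/
structure HomeoZR : Type where
  toFun : ℝ → ℝ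
  invFun : ℝ → ℝ
  left_inv : Function.LeftInverse invFun toFun
  right_inv : Function.RightInverse invFun toFun
  strictMono : StrictMono toFun
  map_add_one : ∀ x, toFun (x + 1) = toFun x + 1

namespace HomeoZR

/-- The identity. -/
protected def id : HomeoZR :=
  ⟨_root_.id, _root_.id, fun _ => rfl, fun _ => rfl, strictMono_id, fun _ => rfl⟩

/-- Composition `f ∘ g`. -/
protected def comp (f g : HomeoZR) : HomeoZR where
  toFun := f.toFun ∘ g.toFun
  invFun := g.invFun ∘ f.invFun
  left_inv := fun x => by
    show g.invFun (f.invFun (f.toFun (g.toFun x))) = x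
    rw [f.left_inv, g.left_inv]
  right_inv := fun x => by
    show f.toFun (g.toFun (g.invFun (f.invFun x))) = x
    rw [g.right_inv, f.right_inv]
  strictMono := f.strictMono.comp g.strictMono
  map_add_one := fun x => by
    show f.toFun (g.toFun (x + 1)) = f.toFun (g.toFun x) + 1
    rw [g.map_add_one, f.map_add_one]

/-- Inverse. -/
protected def symm (f : HomeoZR) : HomeoZR where
  toFun := f.invFun
  invFun := f.toFun
  left_inv := f.right_inv
  right_inv := f.left_inv
  strictMono := by
    intro x y hxy
    rcases lt_trichotomy (f.invFun x) (f.invFun y) with h | h | h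
    · exact h
    · exact absurd (by rw [← f.right_inv x, ← f.right_inv y, h]) (ne_of_lt hxy)
    · have h2 := f.strictMono h
      rw [f.right_inv, f.right_inv] at h2
      exact absurd h2 (lt_asymm hxy)
  map_add_one := fun x => by
    have h1 : f.invFun (f.toFun (f.invFun x + 1)) = f.invFun (x + 1) := by
      rw [f.map_add_one, f.right_inv]
    rw [f.left_inv] at h1
    exact h1.symm

/-- The associated monotone degree-one lift. -/
def toLift (f : HomeoZR) : CircleDeg1Lift :=
  ⟨⟨f.toFun, f.strictMono.monotone⟩, f.map_add_one⟩

/-- The translation number `rot̃(f)`. -/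
noncomputable def transNum (f : HomeoZR) : ℝ :=
  f.toLift.translationNumber

/-- The canonical lift of the underlying circle homeomorphism: the lift whose
translation number lies in `[0,1)`, as a plain function. -/
noncomputable def canon (f : HomeoZR) : ℝ → ℝ :=
  fun x => f.toFun x - (⌊f.transNum⌋ : ℝ)

/-- The periodic points of the underlying circle homeomorphism, as a
`ℤ`-periodic subset of `ℝ`. -/
def Per (f : HomeoZR) : Set ℝ :=
  {x | ∃ n : ℕ, 0 < n ∧ ∃ m : ℤ, f.toFun^[n] x = x + m}

/-- The fixed points of the underlying circle homeomorphism, as a subset of `ℝ`. -/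
def FixS (f : HomeoZR) : Set ℝ :=
  {x | ∃ m : ℤ, f.toFun x = x + m}

/-- `q(f)`: the minimal period of the underlying circle homeomorphism. -/
noncomputable def q (f : HomeoZR) : ℕ :=
  sInf {n : ℕ | 0 < n ∧ ∃ x : ℝ, ∃ m : ℤ, f.toFun^[n] x = x + m}

/-- `p(f)`: the least `p ≥ 0` with `rot(f) = p / q(f)` mod `ℤ`. -/
noncomputable def p (f : HomeoZR) : ℕ :=
  sInf {p : ℕ | ∃ m : ℤ, f.transNum = (p : ℝ) / (f.q : ℝ) + (m : ℝ)}

/-- Natural powers. -/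
protected def npow (f : HomeoZR) : ℕ → HomeoZR
  | 0 => HomeoZR.id
  | n + 1 => (f.npow n).comp f

/-- Integer powers. -/
protected def zpow (f : HomeoZR) (k : ℤ) : HomeoZR :=
  if 0 ≤ k then f.npow k.toNat else f.symm.npow (-k).toNat

end HomeoZR

/-- `f` has rational rotation number. -/
def RatRot (f : HomeoZR) : Prop := ∃ r : ℚ, f.transNum = (r : ℝ)

/-- `F` is a positive one-parameter family (one-parameter group) commuting with `f`:
for `t ≠ 0` the fixed set of `F t` is the frontier of `Per f`, and for `t > 0` the
canonical lift of `F t` moves every point off the frontier strictly to the right. -/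
def PosFamily (f : HomeoZR) (F : ℝ → HomeoZR) : Prop :=
  (∀ s t, (F (s + t)).toFun = (F s).toFun ∘ (F t).toFun) ∧
  (∀ t, (F t).toFun ∘ f.toFun = f.toFun ∘ (F t).toFun) ∧
  (∀ t, t ≠ 0 → (F t).FixS = frontier f.Per) ∧
  (∀ t, 0 < t → ∀ x, x ∉ frontier f.Per → x < (F t).canon x)

/-- `δ_{f,g}(x,t)`, where `F` is a positive one-parameter family commuting with `f`. -/
noncomputable def delta (F : ℝ → HomeoZR) (g : HomeoZR) (x t : ℝ) : ℝ :=
  ((F t).canon ∘ g.canon)^[g.q] x - x - (g.p : ℝ)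

/-- Persistent periodic points. -/
def Pset (F : ℝ → HomeoZR) (g : HomeoZR) : Set ℝ := {x | ∀ t, delta F g x t = 0}

/-- Never-periodic points. -/
def Nset (F : ℝ → HomeoZR) (g : HomeoZR) : Set ℝ := {x | ∀ t, delta F g x t ≠ 0}

/-- Points periodic at a unique time. -/
def Uset (F : ℝ → HomeoZR) (g : HomeoZR) : Set ℝ := {x | ∃! t, delta F g x t = 0}

/-- `x` has a finite orbit in the circle under the group generated by `f` and `g`. -/
def FiniteOrbit (f g : HomeoZR) (x : ℝ) : Prop :=
  ∃ S : Set ℝ, S.Finite ∧ x ∈ S ∧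
    (∀ y ∈ S, ∃ z ∈ S, ∃ m : ℤ, f.toFun y = z + m) ∧
    (∀ y ∈ S, ∃ z ∈ S, ∃ m : ℤ, g.toFun y = z + m)

/-- `τ(f_1, …, f_n) = rot̃(f_n ∘ ⋯ ∘ f_1) − Σ rot̃(f_i)`. -/
noncomputable def tau (L : List HomeoZR) : ℝ :=
  (L.foldl (fun h u => u.comp h) HomeoZR.id).transNum
    - (L.map HomeoZR.transNum).sum

/-- An interval of type `(f,g)`: a connected component of the complement of
`Per f ∪ Per g` whose left endpoint lies in `Per f` and right endpoint in `Per g`,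
recorded by its pair of endpoints (as lifts in `ℝ`). -/
def typeInterval (f g : HomeoZR) : Set (ℝ × ℝ) :=
  {p | p.1 < p.2 ∧ p.1 ∈ f.Per ∧ p.2 ∈ g.Per ∧
    Set.Ioo p.1 p.2 ∩ (f.Per ∪ g.Per) = ∅}

namespace AltAux

open HomeoZR

lemma surj (f : HomeoZR) : Function.Surjective f.toFun :=
  fun y => ⟨f.invFun y, f.right_inv y⟩

lemma cont (f : HomeoZR) : Continuous f.toFun :=
  f.strictMono.monotone.continuous_of_surjective (surj f)

lemma coe_toLift (f : HomeoZR) : ⇑f.toLift = f.toFun := rfl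

lemma coe_toLift_pow (f : HomeoZR) (n : ℕ) : ⇑(f.toLift ^ n) = f.toFun^[n] := by
  rw [CircleDeg1Lift.coe_pow]; rfl

lemma map_add_int (f : HomeoZR) (x : ℝ) (m : ℤ) : f.toFun (x + m) = f.toFun x + m :=
  f.toLift.map_add_int x m

lemma iterate_add_int (f : HomeoZR) (n : ℕ) (x : ℝ) (m : ℤ) :
    f.toFun^[n] (x + m) = f.toFun^[n] x + m := by
  have h := (f.toLift ^ n).map_add_int x m
  rwa [coe_toLift_pow] at h

lemma iterate_sub_int (f : HomeoZR) (n : ℕ) (x : ℝ) (m : ℤ) :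
    f.toFun^[n] (x - m) = f.toFun^[n] x - m := by
  have h := iterate_add_int f n x (-m)
  push_cast at h
  rw [← sub_eq_add_neg, ← sub_eq_add_neg] at h
  exact h

lemma iterate_strictMono (f : HomeoZR) (n : ℕ) : StrictMono (f.toFun^[n]) :=
  f.strictMono.iterate n

/-- If an iterate fixes `x` mod a translation, and a strict mono map `h` satisfies
`h^[t] x = x` with `t > 0`, then `h x = x`. -/
lemma fix_of_iterate_fix {h : ℝ → ℝ} (hm : StrictMono h) {t : ℕ} (ht : 0 < t) {x : ℝ}
    (hx : h^[t] x = x) : h x = x := by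
  rcases lt_trichotomy (h x) x with hlt | heq | hgt
  · exfalso
    have key : ∀ j : ℕ, h^[j + 1] x < x := by
      intro j
      induction j with
      | zero => simpa using hlt
      | succ j ih =>
        have : h (h^[j + 1] x) < h x := hm ih
        calc h^[j + 1 + 1] x = h (h^[j+1] x) := Function.iterate_succ_apply' h _ x
          _ < h x := hm ih
          _ < x := hlt
    obtain ⟨t', rfl⟩ : ∃ t', t = t' + 1 := ⟨t - 1, by omega⟩
    exact absurd hx (ne_of_lt (key t'))
  · exact heq
  · exfalso
    have key : ∀ j : ℕ, x < h^[j + 1] x := by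
      intro j
      induction j with
      | zero => simpa using hgt
      | succ j ih =>
        calc x < h x := hgt
          _ < h (h^[j+1] x) := hm ih
          _ = h^[j + 1 + 1] x := (Function.iterate_succ_apply' h _ x).symm
    obtain ⟨t', rfl⟩ : ∃ t', t = t' + 1 := ⟨t - 1, by omega⟩
    exact absurd hx (ne_of_gt (key t'))

lemma per_char (f : HomeoZR) {r : ℚ} (hr : f.transNum = (r : ℝ)) :
    f.Per = {x | f.toFun^[r.den] x = x + (r.num : ℝ)} := by
  ext x
  constructor
  · rintro ⟨n, hn, m, hx⟩
    -- translation number of f is m / n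
    have hpow : (f.toLift ^ n) x = x + m := by rw [coe_toLift_pow]; exact hx
    have htau : f.toLift.translationNumber = (m : ℝ) / n :=
      f.toLift.translationNumber_of_map_pow_eq_add_int hpow hn
    have hrat : (r : ℝ) = (m : ℝ) / n := by rw [← hr]; exact htau
    have hrq : r = (m : ℚ) / (n : ℚ) := by
      have : ((r : ℝ)) = (((m : ℚ) / (n : ℚ) : ℚ) : ℝ) := by push_cast; exact hrat
      exact_mod_cast this
    have hn0 : (n : ℤ) ≠ 0 := by exact_mod_cast hn.ne'
    have hdvd : (r.den : ℤ) ∣ (n : ℤ) := by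
      have : r = Rat.divInt m n := by rw [hrq, Rat.divInt_eq_div]; push_cast; ring
      rw [this]
      exact Rat.den_dvd m n
    obtain ⟨t, htn⟩ := hdvd
    have ht0 : 0 < t := by
      by_contra h
      push_neg at h
      have : (n : ℤ) ≤ 0 := htn ▸ mul_nonpos_of_nonneg_of_nonpos (by positivity) h
      omega
    -- m = r.num * t
    have hcross : (m : ℚ) * r.den = r.num * n := by
      have hden : (r.den : ℚ) ≠ 0 := by exact_mod_cast r.den_nz
      have hn0' : (n : ℚ) ≠ 0 := by exact_mod_cast hn.ne'
      have h1 : r * n = m := by rw [hrq]; field_simp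
      have h2 : r * (r.den : ℚ) = (r.num : ℚ) :=
        (eq_div_iff hden).mp (Rat.num_div_den r).symm
      linear_combination -(r.den : ℚ) * h1 + (n : ℚ) * h2
    have hm : m = r.num * t := by
      have : (m : ℤ) * r.den = r.num * n := by exact_mod_cast hcross
      rw [htn] at this
      have hden0 : (r.den : ℤ) ≠ 0 := by exact_mod_cast r.den_nz
      have : (r.den : ℤ) * m = (r.den : ℤ) * (r.num * t) := by ring_nf; ring_nf at this; linarith
      exact mul_left_cancel₀ hden0 this
    -- now use h y = f^[r.den] y - r.num
    set q := r.den with hq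
    set h : ℝ → ℝ := fun y => f.toFun^[q] y - (r.num : ℝ) with hh
    have hmono : StrictMono h := by
      intro a b hab
      simpa [hh] using iterate_strictMono f q hab
    have hiter : ∀ j : ℕ, h^[j] x = f.toFun^[q * j] x - (((j : ℤ) * r.num : ℤ) : ℝ) := by
      intro j
      induction j with
      | zero => simp
      | succ j ih =>
        rw [Function.iterate_succ_apply', ih, hh]
        simp only
        rw [iterate_sub_int f q (f.toFun^[q * j] x) ((j : ℤ) * r.num),
          ← Function.iterate_add_apply]
        have hqj : q + q * j = q * (j + 1) := by ring
        rw [hqj]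
        push_cast
        ring
    have htnat : n = q * t.toNat := by
      have htt : (t.toNat : ℤ) = t := Int.toNat_of_nonneg ht0.le
      have h' : (n : ℤ) = (q : ℤ) * (t.toNat : ℤ) := by rw [htt]; exact htn
      exact_mod_cast h'
    have ht0' : 0 < t.toNat := by omega
    have hfix : h^[t.toNat] x = x := by
      rw [hiter, ← htnat, hx, hm]
      push_cast
      have : (t.toNat : ℝ) = (t : ℝ) := by exact_mod_cast Int.toNat_of_nonneg ht0.le
      rw [this]; ring
    have := fix_of_iterate_fix hmono ht0' hfix
    have : f.toFun^[q] x - (r.num : ℝ) = x := this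
    simp only [Set.mem_setOf_eq]
    linarith
  · intro hx
    exact ⟨r.den, r.pos, r.num, hx⟩

lemma per_closed (f : HomeoZR) (hf : RatRot f) : IsClosed f.Per := by
  obtain ⟨r, hr⟩ := hf
  rw [per_char f hr]
  have : Continuous (f.toFun^[r.den]) := (cont f).iterate r.den
  exact isClosed_eq this (by continuity)

lemma per_nonempty (f : HomeoZR) (hf : RatRot f) : f.Per.Nonempty := by
  obtain ⟨r, hr⟩ := hf
  have hcont : Continuous f.toLift := cont f
  have : f.toLift.translationNumber = (r.num : ℝ) / (r.den : ℝ) := by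
    show f.transNum = _
    rw [hr, Rat.cast_def]
  obtain ⟨x, hx⟩ := (f.toLift.translationNumber_eq_rat_iff hcont r.pos).mp this
  refine ⟨x, r.den, r.pos, r.num, ?_⟩
  rw [← coe_toLift_pow]; exact hx

lemma per_add_int (f : HomeoZR) {x : ℝ} (hx : x ∈ f.Per) (m : ℤ) : x + m ∈ f.Per := by
  obtain ⟨n, hn, m', hx'⟩ := hx
  exact ⟨n, hn, m', by rw [iterate_add_int, hx']; ring⟩

/-! ### Abstract gap combinatorics -/

/-- A gap of type `(A, B)`. -/
def Gap (A B : Set ℝ) : Set (ℝ × ℝ) :=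
  {p | p.1 < p.2 ∧ p.1 ∈ A ∧ p.2 ∈ B ∧ Set.Ioo p.1 p.2 ∩ (A ∪ B) = ∅}

lemma typeInterval_eq_gap (f g : HomeoZR) : typeInterval f g = Gap f.Per g.Per := rfl

/-- A gap of a closed set `C`. -/
def IsGapOf (C : Set ℝ) (p : ℝ × ℝ) : Prop :=
  p.1 < p.2 ∧ p.1 ∈ C ∧ p.2 ∈ C ∧ Set.Ioo p.1 p.2 ∩ C = ∅

section Gaps

variable {A B C : Set ℝ} {p p' : ℝ × ℝ}

lemma gap_isGapOf (hp : p ∈ Gap A B) : IsGapOf (A ∪ B) p :=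
  ⟨hp.1, Or.inl hp.2.1, Or.inr hp.2.2.1, hp.2.2.2⟩

lemma gap_isGapOf' (hp : p ∈ Gap B A) : IsGapOf (A ∪ B) p := by
  refine ⟨hp.1, Or.inr hp.2.1, Or.inl hp.2.2.1, ?_⟩
  rw [Set.union_comm]
  exact hp.2.2.2

lemma gapOf_sep (hp : IsGapOf C p) {x : ℝ} (hx : x ∈ C) (hlt : p.1 < x) : p.2 ≤ x := by
  by_contra h
  push_neg at h
  exact absurd (Set.eq_empty_iff_forall_notMem.mp hp.2.2.2 x ⟨⟨hlt, h⟩, hx⟩) (by simp)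

lemma gapOf_le (hp : IsGapOf C p) (hp' : IsGapOf C p') (h : p.1 < p'.1) : p.2 ≤ p'.1 :=
  gapOf_sep hp hp'.2.1 h

lemma gapOf_unique_left (hp : IsGapOf C p) (hp' : IsGapOf C p') (h : p.1 = p'.1) : p = p' := by
  refine Prod.ext h ?_
  rcases lt_trichotomy p.2 p'.2 with hlt | heq | hgt
  · exact absurd (Set.eq_empty_iff_forall_notMem.mp hp'.2.2.2 p.2
      ⟨⟨h ▸ hp.1, hlt⟩, hp.2.2.1⟩) (by simp)
  · exact heq
  · exact absurd (Set.eq_empty_iff_forall_notMem.mp hp.2.2.2 p'.2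
      ⟨⟨h ▸ hp'.1, hgt⟩, hp'.2.2.1⟩) (by simp)

lemma gap_translate (hAper : ∀ x ∈ A, ∀ m : ℤ, x + m ∈ A) (hBper : ∀ x ∈ B, ∀ m : ℤ, x + m ∈ B)
    (hp : p ∈ Gap A B) (m : ℤ) : (p.1 + m, p.2 + m) ∈ Gap A B := by
  refine ⟨by simpa using add_lt_add_right hp.1 (m : ℝ), hAper _ hp.2.1 m, hBper _ hp.2.2.1 m, ?_⟩
  rw [Set.eq_empty_iff_forall_notMem]
  rintro x ⟨⟨hx1, hx2⟩, hx3⟩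
  have hx3' : x + (-m : ℤ) ∈ A ∪ B := by
    rcases hx3 with h | h
    · exact Or.inl (hAper _ h _)
    · exact Or.inr (hBper _ h _)
  have hx1' : p.1 + (m : ℝ) < x := hx1
  have hx2' : x < p.2 + (m : ℝ) := hx2
  refine absurd (Set.eq_empty_iff_forall_notMem.mp hp.2.2.2 (x + (-m : ℤ)) ⟨⟨?_, ?_⟩, hx3'⟩)
    (by simp)
  · push_cast; linarith
  · push_cast; linarith

lemma gap_exists (hA : IsClosed A) (hB : IsClosed B) (hd : A ∩ B = ∅) {a b : ℝ}
    (ha : a ∈ A) (hb : b ∈ B) (hab : a < b) :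
    ∃ p : ℝ × ℝ, p ∈ Gap A B ∧ a ≤ p.1 ∧ p.2 ≤ b := by
  have hdisj : ∀ x, x ∈ A → x ∈ B → False := fun x h1 h2 =>
    absurd (Set.eq_empty_iff_forall_notMem.mp hd x ⟨h1, h2⟩) (by simp)
  set S := B ∩ Set.Icc a b with hS
  have hSne : S.Nonempty := ⟨b, hb, le_of_lt hab, le_refl b⟩
  have hSc : IsClosed S := hB.inter isClosed_Icc
  have hSbdd : BddBelow S := ⟨a, fun x hx => hx.2.1⟩
  set b' := sInf S with hb'
  have hb'S : b' ∈ S := hSc.csInf_mem hSne hSbdd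
  have hab' : a < b' := lt_of_le_of_ne hb'S.2.1 (fun h => hdisj a ha (h ▸ hb'S.1))
  set T := A ∩ Set.Icc a b' with hT
  have hTne : T.Nonempty := ⟨a, ha, le_refl a, le_of_lt hab'⟩
  have hTc : IsClosed T := hA.inter isClosed_Icc
  have hTbdd : BddAbove T := ⟨b', fun x hx => hx.2.2⟩
  set a' := sSup T with ha'
  have ha'T : a' ∈ T := hTc.csSup_mem hTne hTbdd
  have ha'b' : a' < b' := lt_of_le_of_ne ha'T.2.2 (fun h => hdisj a' ha'T.1 (h ▸ hb'S.1))
  refine ⟨(a', b'), ⟨ha'b', ha'T.1, hb'S.1, ?_⟩, ha'T.2.1, hb'S.2.2⟩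
  rw [Set.eq_empty_iff_forall_notMem]
  rintro x ⟨⟨hx1, hx2⟩, hx3 | hx3⟩
  · have hx1' : a' < x := hx1
    have hx2' : x < b' := hx2
    have : x ∈ T := ⟨hx3, le_trans ha'T.2.1 (le_of_lt hx1'), le_of_lt hx2'⟩
    exact absurd (le_csSup hTbdd this) (not_le.mpr hx1')
  · have hx1' : a' < x := hx1
    have hx2' : x < b' := hx2
    have : x ∈ S := ⟨hx3, le_trans ha'T.2.1 (le_of_lt hx1'), le_trans (le_of_lt hx2') hb'S.2.2⟩
    exact absurd (csInf_le hSbdd this) (not_le.mpr hx2')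

lemma exists_sep (hA : IsClosed A) (hB : IsClosed B) (hAne : (A ∩ Set.Icc (0:ℝ) 2).Nonempty)
    (hBne : B.Nonempty) (hd : A ∩ B = ∅) :
    ∃ ε > (0:ℝ), ∀ a ∈ A ∩ Set.Icc (0:ℝ) 2, ∀ b ∈ B, ε ≤ |b - a| := by
  set K := A ∩ Set.Icc (0:ℝ) 2 with hK
  have hKc : IsCompact K :=
    IsCompact.of_isClosed_subset isCompact_Icc (hA.inter isClosed_Icc) Set.inter_subset_right
  have hcont : Continuous fun x : ℝ => Metric.infDist x B := Metric.continuous_infDist_pt B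
  obtain ⟨x0, hx0K, hx0min⟩ := hKc.exists_isMinOn hAne hcont.continuousOn
  have hx0B : x0 ∉ B := fun h =>
    absurd (Set.eq_empty_iff_forall_notMem.mp hd x0 ⟨hx0K.1, h⟩) (by simp)
  have hpos : 0 < Metric.infDist x0 B := (hB.notMem_iff_infDist_pos hBne).mp hx0B
  refine ⟨Metric.infDist x0 B, hpos, fun a ha b hb => ?_⟩
  calc Metric.infDist x0 B ≤ Metric.infDist a B := hx0min ha
    _ ≤ dist a b := Metric.infDist_le_dist_of_mem hb
    _ = |b - a| := by rw [Real.dist_eq, abs_sub_comm]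

end Gaps

lemma int_div_mod_unique {a N q r : ℤ} (hN : 0 < N) (h : a = N * q + r) (h0 : 0 ≤ r)
    (h1 : r < N) : a / N = q ∧ a % N = r := by
  constructor
  · rw [h, show N * q + r = r + N * q by ring, Int.add_mul_ediv_left r q hN.ne',
      Int.ediv_eq_zero_of_lt h0 h1, zero_add]
  · rw [h, show N * q + r = r + N * q by ring, Int.add_mul_emod_self_left,
      Int.emod_eq_of_lt h0 h1]

set_option maxHeartbeats 1000000 in
lemma main_aux {A B : Set ℝ} (hA : IsClosed A) (hB : IsClosed B)
    (hAne : A.Nonempty) (hBne : B.Nonempty) (hd : A ∩ B = ∅)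
    (hAper : ∀ x ∈ A, ∀ m : ℤ, x + m ∈ A) (hBper : ∀ x ∈ B, ∀ m : ℤ, x + m ∈ B) :
    ∃ ℓ : ℕ, 0 < ℓ ∧ ∃ I : ℤ → ℝ × ℝ,
      (∀ k : ℤ, (I k).1 < (I k).2) ∧
      (∀ k : ℤ, (I k).2 ≤ (I (k + 1)).1) ∧
      (∀ k : ℤ, I (k + 2 * (ℓ : ℤ)) = ((I k).1 + 1, (I k).2 + 1)) ∧
      (∀ k : ℤ, Even k → I k ∈ Gap A B) ∧
      (∀ k : ℤ, Odd k → I k ∈ Gap B A) ∧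
      (∀ p ∈ Gap A B, ∃ k : ℤ, Even k ∧ I k = p) ∧
      (∀ p ∈ Gap B A, ∃ k : ℤ, Odd k ∧ I k = p) := by
  classical
  have hdisj : ∀ x, x ∈ A → x ∈ B → False := fun x h1 h2 =>
    absurd (Set.eq_empty_iff_forall_notMem.mp hd x ⟨h1, h2⟩) (by simp)
  have hmix : ∀ p, p ∈ Gap A B ∪ Gap B A → IsGapOf (A ∪ B) p := fun p hp =>
    hp.elim gap_isGapOf gap_isGapOf'
  set M : Set (ℝ × ℝ) := {p | p ∈ Gap A B ∪ Gap B A ∧ 0 ≤ p.1 ∧ p.1 < 1} with hM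
  have htrAB : ∀ p ∈ Gap A B, ∀ m : ℤ, (p.1 + (m : ℝ), p.2 + (m : ℝ)) ∈ Gap A B :=
    fun p hp m => gap_translate hAper hBper hp m
  have htrBA : ∀ p ∈ Gap B A, ∀ m : ℤ, (p.1 + (m : ℝ), p.2 + (m : ℝ)) ∈ Gap B A :=
    fun p hp m => gap_translate hBper hAper hp m
  have hlen : ∀ p, p ∈ Gap A B ∪ Gap B A → p.2 ≤ p.1 + 1 := by
    intro p hp
    have h1 : p.1 + (1 : ℝ) ∈ A ∪ B := by
      have := (hmix p hp).2.1
      rcases this with h | h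
      · exact Or.inl (by simpa using hAper _ h 1)
      · exact Or.inr (by simpa using hBper _ h 1)
    exact gapOf_sep (hmix p hp) h1 (by linarith [(hmix p hp).1])
  -- ε-separation
  have hAK : (A ∩ Set.Icc (0:ℝ) 2).Nonempty := by
    obtain ⟨a, ha⟩ := hAne
    refine ⟨a + ((-⌊a⌋ : ℤ) : ℝ), hAper a ha _, ?_, ?_⟩
    · push_cast; linarith [Int.floor_le a]
    · push_cast; linarith [Int.lt_floor_add_one a]
  obtain ⟨ε, hε, hsep⟩ := exists_sep hA hB hAK hBne hd
  have hsepM : ∀ p ∈ M, p.1 + ε ≤ p.2 := by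
    rintro p ⟨hp, h0, h1⟩
    have hlt := (hmix p hp).1
    rcases hp with hp | hp
    · have := hsep p.1 ⟨hp.2.1, h0, by linarith⟩ p.2 hp.2.2.1
      rw [abs_of_pos (by linarith)] at this
      linarith
    · have hp2 : p.2 ∈ A ∩ Set.Icc (0:ℝ) 2 :=
        ⟨hp.2.2.1, by linarith, by linarith [hlen p (Or.inr hp)]⟩
      have := hsep p.2 hp2 p.1 hp.2.1
      rw [abs_of_neg (by linarith)] at this
      linarith
  have hMfin : M.Finite := by
    have hinj : Set.InjOn (fun p : ℝ × ℝ => ⌊p.1 / ε⌋) M := by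
      intro p hp p' hp' h
      simp only at h
      have key : ∀ u v : ℝ × ℝ, u ∈ M → v ∈ M → u.1 < v.1 → ⌊u.1 / ε⌋ < ⌊v.1 / ε⌋ := by
        intro u v hu hv huv
        have h1 : u.2 ≤ v.1 := gapOf_le (hmix u hu.1) (hmix v hv.1) huv
        have h2 : u.1 + ε ≤ v.1 := le_trans (hsepM u hu) h1
        have h3 : u.1 / ε + 1 ≤ v.1 / ε := by
          have h4 : (u.1 + ε) / ε ≤ v.1 / ε := (div_le_div_iff_of_pos_right hε).mpr h2
          rw [add_div, div_self hε.ne'] at h4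
          exact h4
        calc ⌊u.1 / ε⌋ < ⌊u.1 / ε⌋ + 1 := lt_add_one _
          _ = ⌊u.1 / ε + 1⌋ := (Int.floor_add_one _).symm
          _ ≤ ⌊v.1 / ε⌋ := Int.floor_le_floor h3
      rcases lt_trichotomy p.1 p'.1 with hlt | heq | hgt
      · exact absurd h (ne_of_lt (key p p' hp hp' hlt))
      · exact gapOf_unique_left (hmix p hp.1) (hmix p' hp'.1) heq
      · exact absurd h.symm (ne_of_lt (key p' p hp' hp hgt))
    have himg : (fun p : ℝ × ℝ => ⌊p.1 / ε⌋) '' M ⊆ Set.Icc 0 ⌊1/ε⌋ := by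
      rintro x ⟨p, hp, rfl⟩
      constructor
      · exact Int.floor_nonneg.mpr (div_nonneg hp.2.1 hε.le)
      · exact Int.floor_le_floor ((div_le_div_iff_of_pos_right hε).mpr hp.2.2.le)
    exact Set.Finite.of_finite_image ((Set.finite_Icc _ _).subset himg) hinj
  have hMne : M.Nonempty := by
    obtain ⟨a, ha⟩ := hAne
    obtain ⟨b0, hb0⟩ := hBne
    have hbB : b0 + ((⌊a⌋ - ⌊b0⌋ + 1 : ℤ) : ℝ) ∈ B := hBper _ hb0 _
    have hab : a < b0 + ((⌊a⌋ - ⌊b0⌋ + 1 : ℤ) : ℝ) := by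
      push_cast
      linarith [Int.lt_floor_add_one a, Int.floor_le b0]
    obtain ⟨p, hpG, -, -⟩ := gap_exists hA hB hd ha hbB hab
    have e1 : (0:ℝ) ≤ p.1 + ((-⌊p.1⌋ : ℤ) : ℝ) := by push_cast; linarith [Int.floor_le p.1]
    have e2 : p.1 + ((-⌊p.1⌋ : ℤ) : ℝ) < 1 := by push_cast; linarith [Int.lt_floor_add_one p.1]
    exact ⟨(p.1 + ((-⌊p.1⌋ : ℤ) : ℝ), p.2 + ((-⌊p.1⌋ : ℤ) : ℝ)),
      Or.inl (htrAB p hpG _), e1, e2⟩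
  -- enumeration of M
  set Ms := hMfin.toFinset with hMs
  set F := Ms.image Prod.fst with hF
  set N := F.card with hNdef
  have hN0 : 0 < N := by
    obtain ⟨p, hp⟩ := hMne
    exact Finset.card_pos.mpr ⟨p.1, Finset.mem_image_of_mem _ (hMfin.mem_toFinset.mpr hp)⟩
  set e := F.orderIsoOfFin rfl with he
  have hex : ∀ i : Fin N, ∃ p, p ∈ M ∧ p.1 = ((e i : {x // x ∈ F}) : ℝ) := by
    intro i
    obtain ⟨p, hp, hp1⟩ := Finset.mem_image.mp (e i).2
    exact ⟨p, hMfin.mem_toFinset.mp hp, hp1⟩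
  set pr : Fin N → ℝ × ℝ := fun i => (hex i).choose with hprdef
  have hprM : ∀ i, pr i ∈ M := fun i => (hex i).choose_spec.1
  have hpr1 : ∀ i, (pr i).1 = ((e i : {x // x ∈ F}) : ℝ) := fun i => (hex i).choose_spec.2
  have hprG : ∀ i, IsGapOf (A ∪ B) (pr i) := fun i => hmix _ (hprM i).1
  have hprlt : ∀ i j : Fin N, i < j → (pr i).1 < (pr j).1 := by
    intro i j hij
    rw [hpr1, hpr1]
    exact_mod_cast e.strictMono hij
  have hprle : ∀ i j : Fin N, i ≤ j → (pr i).1 ≤ (pr j).1 := by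
    intro i j hij
    rcases eq_or_lt_of_le hij with h | h
    · rw [h]
    · exact (hprlt i j h).le
  have hadj : ∀ i j : Fin N, i < j → (pr i).2 ≤ (pr j).1 := fun i j hij =>
    gapOf_le (hprG i) (hprG j) (hprlt i j hij)
  have hfind : ∀ p ∈ M, ∃ i, pr i = p := by
    intro p hp
    have hpF : p.1 ∈ F := Finset.mem_image_of_mem _ (hMfin.mem_toFinset.mpr hp)
    obtain ⟨i, hi⟩ := e.surjective ⟨p.1, hpF⟩
    refine ⟨i, gapOf_unique_left (hprG i) (hmix p hp.1) ?_⟩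
    rw [hpr1 i, hi]
  set T : Fin N → Prop := fun i => pr i ∈ Gap A B with hTdef
  have hTnot : ∀ i, T i → pr i ∈ Gap B A → False := fun i h1 h2 => hdisj _ h1.2.1 h2.2.1
  have hTiff : ∀ i, ¬ T i ↔ pr i ∈ Gap B A := fun i =>
    ⟨fun h => (hprM i).1.resolve_left h, fun h h' => hTnot i h' h⟩
  have hbetw : ∀ P P' : ℝ × ℝ, P ∈ Gap A B → P' ∈ Gap A B → P.2 ≤ P'.1 →
      ∃ q, q ∈ Gap B A ∧ P.2 ≤ q.1 ∧ q.2 ≤ P'.1 := by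
    intro P P' hP hP' hle
    have hlt : P.2 < P'.1 := lt_of_le_of_ne hle (fun h => hdisj P'.1 hP'.2.1 (h ▸ hP.2.2.1))
    obtain ⟨q, hq, h1, h2⟩ := gap_exists hB hA (by rw [Set.inter_comm]; exact hd)
      hP.2.2.1 hP'.2.1 hlt
    exact ⟨q, hq, h1, h2⟩
  have hbetw' : ∀ P P' : ℝ × ℝ, P ∈ Gap B A → P' ∈ Gap B A → P.2 ≤ P'.1 →
      ∃ q, q ∈ Gap A B ∧ P.2 ≤ q.1 ∧ q.2 ≤ P'.1 := by
    intro P P' hP hP' hle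
    have hlt : P.2 < P'.1 := lt_of_le_of_ne hle (fun h => hdisj P.2 hP.2.2.1 (h ▸ hP'.2.1))
    obtain ⟨q, hq, h1, h2⟩ := gap_exists hA hB hd hP.2.2.1 hP'.2.1 hlt
    exact ⟨q, hq, h1, h2⟩
  -- adjacent alternation
  have halt : ∀ (v : ℕ) (h1 : v < N) (h2 : v + 1 < N),
      (T ⟨v, h1⟩ ↔ ¬ T ⟨v + 1, h2⟩) := by
    intro v h1 h2
    set i : Fin N := ⟨v, h1⟩ with hi
    set j : Fin N := ⟨v + 1, h2⟩ with hj
    have hij : i < j := by rw [Fin.lt_def]; exact Nat.lt_succ_self v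
    have hno : ∀ q ∈ M, (pr i).1 < q.1 → q.1 < (pr j).1 → False := by
      intro q hq hl hr
      obtain ⟨s, hs⟩ := hfind q hq
      have his : i < s := by
        by_contra hcon
        push_neg at hcon
        have := hprle s i hcon
        rw [hs] at this
        linarith
      have hsj : s < j := by
        by_contra hcon
        push_neg at hcon
        have := hprle j s hcon
        rw [hs] at this
        linarith
      rw [Fin.lt_def] at his hsj
      have his' : v < s.val := his
      have hsj' : s.val < v + 1 := hsj
      omega
    have hcontra : ∀ q : ℝ × ℝ, q ∈ Gap A B ∪ Gap B A →
        (pr i).2 ≤ q.1 → q.2 ≤ (pr j).1 → q.1 < q.2 → False := by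
      intro q hqG hql hqr hqlt
      exact hno q ⟨hqG, by linarith [(hprM i).2.1, (hprG i).1], by linarith [(hprM j).2.2]⟩
        (by linarith [(hprG i).1]) (by linarith)
    constructor
    · intro hTi hTj
      obtain ⟨q, hq, hql, hqr⟩ := hbetw (pr i) (pr j) hTi hTj (hadj i j hij)
      exact hcontra q (Or.inr hq) hql hqr hq.1
    · intro hnTj
      by_contra hnTi
      obtain ⟨q, hq, hql, hqr⟩ := hbetw' (pr i) (pr j) ((hTiff i).mp hnTi)
        ((hTiff j).mp hnTj) (hadj i j hij)
      exact hcontra q (Or.inl hq) hql hqr hq.1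
  -- wrap-around
  set z : Fin N := ⟨0, hN0⟩ with hz
  set w : Fin N := ⟨N - 1, by omega⟩ with hw
  have hwrap_le : (pr w).2 ≤ (pr z).1 + 1 := by
    have h01 : (pr w).1 < (pr z).1 + 1 := by linarith [(hprM w).2.2, (hprM z).2.1]
    have htr : IsGapOf (A ∪ B) ((pr z).1 + 1, (pr z).2 + 1) := by
      rcases (hprM z).1 with h | h
      · have := htrAB (pr z) h 1
        rw [show (((1:ℤ)):ℝ) = 1 from by norm_num] at this
        exact gap_isGapOf this
      · have := htrBA (pr z) h 1
        rw [show (((1:ℤ)):ℝ) = 1 from by norm_num] at this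
        exact gap_isGapOf' this
    exact gapOf_le (hprG w) htr h01
  have hwcontra : ∀ q : ℝ × ℝ, q ∈ Gap A B ∪ Gap B A →
      (pr w).2 ≤ q.1 → q.2 ≤ (pr z).1 + 1 → q.1 < q.2 → False := by
    intro q hqG hql hqr hqlt
    have hq01 : 0 ≤ q.1 := by linarith [(hprM w).2.1, (hprG w).1]
    by_cases hcase : q.1 < 1
    · have hqM : q ∈ M := ⟨hqG, hq01, hcase⟩
      obtain ⟨s, hs⟩ := hfind q hqM
      have h1 : (pr s).1 ≤ (pr w).1 := hprle s w (by rw [Fin.le_def]; exact (by omega : s.val ≤ N - 1))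
      rw [hs] at h1
      linarith [(hprG w).1]
    · push_neg at hcase
      have hq' : (q.1 + ((-1 : ℤ) : ℝ), q.2 + ((-1 : ℤ) : ℝ)) ∈ Gap A B ∪ Gap B A := by
        rcases hqG with h | h
        · exact Or.inl (htrAB q h (-1))
        · exact Or.inr (htrBA q h (-1))
      rw [show (((-1:ℤ)):ℝ) = -1 from by norm_num] at hq'
      have hq'M : (q.1 + -1, q.2 + -1) ∈ M := by
        refine ⟨hq', by simp only; linarith, by simp only; linarith [(hprM z).2.2]⟩
      obtain ⟨s, hs⟩ := hfind _ hq'M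
      have h1 : (pr z).1 ≤ (pr s).1 := hprle z s (by rw [Fin.le_def]; exact Nat.zero_le _)
      rw [hs] at h1
      simp only at h1
      linarith
  have hwalt : T w ↔ ¬ T z := by
    constructor
    · intro hTw hTz
      have htr1 := htrAB (pr z) hTz 1
      rw [show (((1:ℤ)):ℝ) = 1 from by norm_num] at htr1
      obtain ⟨q, hq, hql, hqr⟩ := hbetw (pr w) _ hTw htr1 hwrap_le
      exact hwcontra q (Or.inr hq) hql hqr hq.1
    · intro hnz
      by_contra hnw
      have htr1 := htrBA (pr z) ((hTiff z).mp hnz) 1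
      rw [show (((1:ℤ)):ℝ) = 1 from by norm_num] at htr1
      obtain ⟨q, hq, hql, hqr⟩ := hbetw' (pr w) _ ((hTiff w).mp hnw) htr1 hwrap_le
      exact hwcontra q (Or.inl hq) hql hqr hq.1
  -- parity
  have hparity : ∀ (v : ℕ) (h : v < N), (T ⟨v, h⟩ ↔ (Even v ↔ T z)) := by
    intro v
    induction v with
    | zero =>
      intro h
      have : (⟨0, h⟩ : Fin N) = z := rfl
      rw [this]
      simp
    | succ v ih =>
      intro h
      have hv : v < N := by omega
      have h1 := halt v hv h
      have h2 := ih hv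
      rw [Nat.even_add_one]
      tauto
  have hNodd : ¬ Even (N - 1) := by
    have h1 := hparity (N - 1) (by omega)
    have h2 : (⟨N - 1, by omega⟩ : Fin N) = w := rfl
    rw [h2] at h1
    tauto
  have hNeven : Even N := by
    rcases Nat.even_or_odd N with h | h
    · exact h
    · exact absurd (Nat.Odd.sub_odd h odd_one) hNodd
  obtain ⟨l, hl⟩ := hNeven
  have hl0 : 0 < l := by omega
  have hNl : (N : ℤ) = 2 * (l : ℤ) := by push_cast [hl]; ring
  set sN : ℕ := if T z then 0 else 1 with hsNdef
  have hsN01 : sN = 0 ∨ sN = 1 := by rw [hsNdef]; split <;> simp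
  have hkey : ∀ (v : ℕ) (h : v < N), (T ⟨v, h⟩ ↔ Even (v + sN)) := by
    intro v h
    rw [hparity v h, hsNdef]
    by_cases h0 : T z
    · simp [h0]
    · rw [if_neg h0, Nat.even_add_one]
      tauto
  have hNZ : 0 < (N : ℤ) := by exact_mod_cast hN0
  have hidx : ∀ k : ℤ, ((k + (sN : ℤ)) % (N : ℤ)).toNat < N := by
    intro k
    have h1 := Int.emod_nonneg (k + (sN : ℤ)) hNZ.ne'
    have h2 := Int.emod_lt_of_pos (k + (sN : ℤ)) hNZ
    omega
  set idx : ℤ → Fin N := fun k => ⟨((k + (sN : ℤ)) % (N : ℤ)).toNat, hidx k⟩ with hidxdef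
  set I : ℤ → ℝ × ℝ := fun k =>
    ((pr (idx k)).1 + (((k + (sN : ℤ)) / (N : ℤ) : ℤ) : ℝ),
     (pr (idx k)).2 + (((k + (sN : ℤ)) / (N : ℤ) : ℤ) : ℝ)) with hIdef
  have hpar : ∀ k : ℤ, (Even (((k + (sN : ℤ)) % (N : ℤ)).toNat + sN) ↔ Even k) := by
    intro k
    have hdm := Int.mul_ediv_add_emod (k + (sN : ℤ)) (N : ℤ)
    have hprod : (N : ℤ) * ((k + (sN : ℤ)) / (N : ℤ)) =
        2 * ((l : ℤ) * ((k + (sN : ℤ)) / (N : ℤ))) := by rw [hNl]; ring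
    have h0 := Int.emod_nonneg (k + (sN : ℤ)) hNZ.ne'
    rw [Nat.even_iff, Int.even_iff]
    omega
  have hTidx : ∀ k : ℤ, (T (idx k) ↔ Even k) := by
    intro k
    rw [hidxdef]
    simp only
    rw [hkey _ (hidx k), hpar k]
  refine ⟨l, hl0, I, ?_, ?_, ?_, ?_, ?_, ?_, ?_⟩
  · intro k
    simp only [hIdef]
    exact add_lt_add_left (hprG (idx k)).1 _
  · intro k
    have hdm := Int.mul_ediv_add_emod (k + (sN : ℤ)) (N : ℤ)
    have h0 := Int.emod_nonneg (k + (sN : ℤ)) hNZ.ne'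
    have h1 := Int.emod_lt_of_pos (k + (sN : ℤ)) hNZ
    have hks : k + 1 + (sN : ℤ) = (k + (sN : ℤ)) + 1 := by ring
    by_cases hcase : (k + (sN : ℤ)) % (N : ℤ) + 1 < (N : ℤ)
    · have hu := int_div_mod_unique hNZ
        (show (k + (sN : ℤ)) + 1 = (N : ℤ) * ((k + (sN : ℤ)) / (N : ℤ)) +
          ((k + (sN : ℤ)) % (N : ℤ) + 1) by linarith) (by omega) hcase
      have hidx1 : idx (k + 1) = ⟨((k + (sN : ℤ)) % (N : ℤ)).toNat + 1, by omega⟩ := by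
        rw [hidxdef]
        apply Fin.ext
        simp only
        rw [hks, hu.2]
        omega
      have hlt : idx k < idx (k + 1) := by
        rw [hidx1, hidxdef, Fin.lt_def]
        simp only
        omega
      have := hadj (idx k) (idx (k + 1)) hlt
      simp only [hIdef]
      rw [hks, hu.1]
      linarith
    · have heq : (k + (sN : ℤ)) % (N : ℤ) = (N : ℤ) - 1 := by omega
      have hu := int_div_mod_unique hNZ
        (show (k + (sN : ℤ)) + 1 = (N : ℤ) * ((k + (sN : ℤ)) / (N : ℤ) + 1) + 0 by
          rw [mul_add, mul_one]; linarith) (le_refl 0) hNZ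
      have hidxk : idx k = w := by
        rw [hidxdef, hw]
        apply Fin.ext
        simp only
        omega
      have hidx1 : idx (k + 1) = z := by
        rw [hidxdef, hz]
        apply Fin.ext
        simp only
        rw [hks, hu.2]
        simp
      simp only [hIdef]
      rw [hks, hu.1, hidxk, hidx1]
      push_cast
      linarith [hwrap_le]
  · intro k
    have hdm := Int.mul_ediv_add_emod (k + (sN : ℤ)) (N : ℤ)
    have h0 := Int.emod_nonneg (k + (sN : ℤ)) hNZ.ne'
    have h1 := Int.emod_lt_of_pos (k + (sN : ℤ)) hNZ
    have hks : k + 2 * (l : ℤ) + (sN : ℤ) = (k + (sN : ℤ)) + (N : ℤ) := by rw [hNl]; ring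
    have hu := int_div_mod_unique hNZ
      (show (k + (sN : ℤ)) + (N : ℤ) = (N : ℤ) * ((k + (sN : ℤ)) / (N : ℤ) + 1) +
        ((k + (sN : ℤ)) % (N : ℤ)) by rw [mul_add, mul_one]; linarith) h0 h1
    have hidx2 : idx (k + 2 * (l : ℤ)) = idx k := by
      rw [hidxdef]
      apply Fin.ext
      simp only
      rw [hks, hu.2]
    simp only [hIdef]
    rw [hks, hu.1, hidx2]
    simp only [Prod.mk.injEq]
    push_cast
    constructor <;> ring
  · intro k hk
    have hTk : T (idx k) := (hTidx k).mpr hk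
    have := htrAB (pr (idx k)) hTk ((k + (sN : ℤ)) / (N : ℤ))
    simpa only [hIdef] using this
  · intro k hk
    have hTk : ¬ T (idx k) := by
      rw [hTidx k]
      exact (Int.not_even_iff_odd.mpr hk)
    have := htrBA (pr (idx k)) ((hTiff _).mp hTk) ((k + (sN : ℤ)) / (N : ℤ))
    simpa only [hIdef] using this
  · intro p hp
    have hP : (p.1 + ((-⌊p.1⌋ : ℤ) : ℝ), p.2 + ((-⌊p.1⌋ : ℤ) : ℝ)) ∈ Gap A B :=
      htrAB p hp (-⌊p.1⌋)
    have hPM : (p.1 + ((-⌊p.1⌋ : ℤ) : ℝ), p.2 + ((-⌊p.1⌋ : ℤ) : ℝ)) ∈ M := by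
      have e1 : (0:ℝ) ≤ p.1 + ((-⌊p.1⌋ : ℤ) : ℝ) := by push_cast; linarith [Int.floor_le p.1]
      have e2 : p.1 + ((-⌊p.1⌋ : ℤ) : ℝ) < 1 := by push_cast; linarith [Int.lt_floor_add_one p.1]
      exact ⟨Or.inl hP, e1, e2⟩
    obtain ⟨i, hi⟩ := hfind _ hPM
    have hTi : T i := by
      show pr i ∈ Gap A B
      rw [hi]
      exact hP
    have hEi : Even (i.val + sN) := (hkey i.val i.isLt).mp (by
      have : (⟨i.val, i.isLt⟩ : Fin N) = i := rfl
      rw [this]; exact hTi)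
    refine ⟨(i.val : ℤ) + ⌊p.1⌋ * (N : ℤ) - (sN : ℤ), ?_, ?_⟩
    · obtain ⟨c, hc⟩ : ∃ c : ℤ, ⌊p.1⌋ * (N : ℤ) = 2 * c := ⟨⌊p.1⌋ * l, by rw [hNl]; ring⟩
      rw [Int.even_iff]
      rw [Nat.even_iff] at hEi
      omega
    · have hks : (i.val : ℤ) + ⌊p.1⌋ * (N : ℤ) - (sN : ℤ) + (sN : ℤ) =
        (N : ℤ) * ⌊p.1⌋ + (i.val : ℤ) := by ring
      have hu := int_div_mod_unique hNZ hks (Int.natCast_nonneg _) (by exact_mod_cast i.isLt)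
      have hidxk : idx ((i.val : ℤ) + ⌊p.1⌋ * (N : ℤ) - (sN : ℤ)) = i := by
        rw [hidxdef]
        apply Fin.ext
        simp only
        rw [hu.2]
        omega
      simp only [hIdef]
      rw [hidxk, hu.1, hi]
      rw [Prod.ext_iff]
      refine ⟨?_, ?_⟩ <;> · simp only; push_cast; ring_nf
  · intro p hp
    have hP : (p.1 + ((-⌊p.1⌋ : ℤ) : ℝ), p.2 + ((-⌊p.1⌋ : ℤ) : ℝ)) ∈ Gap B A :=
      htrBA p hp (-⌊p.1⌋)
    have hPM : (p.1 + ((-⌊p.1⌋ : ℤ) : ℝ), p.2 + ((-⌊p.1⌋ : ℤ) : ℝ)) ∈ M := by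
      have e1 : (0:ℝ) ≤ p.1 + ((-⌊p.1⌋ : ℤ) : ℝ) := by push_cast; linarith [Int.floor_le p.1]
      have e2 : p.1 + ((-⌊p.1⌋ : ℤ) : ℝ) < 1 := by push_cast; linarith [Int.lt_floor_add_one p.1]
      exact ⟨Or.inr hP, e1, e2⟩
    obtain ⟨i, hi⟩ := hfind _ hPM
    have hTi : ¬ T i := by
      rw [hTiff i, hi]
      exact hP
    have hEi : ¬ Even (i.val + sN) := by
      rw [← hkey i.val i.isLt]
      have : (⟨i.val, i.isLt⟩ : Fin N) = i := rfl
      rw [this]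
      exact hTi
    refine ⟨(i.val : ℤ) + ⌊p.1⌋ * (N : ℤ) - (sN : ℤ), ?_, ?_⟩
    · obtain ⟨c, hc⟩ : ∃ c : ℤ, ⌊p.1⌋ * (N : ℤ) = 2 * c := ⟨⌊p.1⌋ * l, by rw [hNl]; ring⟩
      rw [Int.odd_iff]
      rw [Nat.not_even_iff] at hEi
      omega
    · have hks : (i.val : ℤ) + ⌊p.1⌋ * (N : ℤ) - (sN : ℤ) + (sN : ℤ) =
        (N : ℤ) * ⌊p.1⌋ + (i.val : ℤ) := by ring
      have hu := int_div_mod_unique hNZ hks (Int.natCast_nonneg _) (by exact_mod_cast i.isLt)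
      have hidxk : idx ((i.val : ℤ) + ⌊p.1⌋ * (N : ℤ) - (sN : ℤ)) = i := by
        rw [hidxdef]
        apply Fin.ext
        simp only
        rw [hu.2]
        omega
      simp only [hIdef]
      rw [hidxk, hu.1, hi]
      rw [Prod.ext_iff]
      refine ⟨?_, ?_⟩ <;> · simp only; push_cast; ring_nf

end AltAux

/-- If `Per f ∩ Per g = ∅` then there are finitely many intervals of
type `(f,g)` and of type `(g,f)` on the circle (`2ℓ` per fundamental domain), equal in
number (`ℓ` each), and they alternate around the circle. -/
theorem alternating_type_intervals (f g : HomeoZR)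
    (hf : RatRot f) (hg : RatRot g)
    (hdisj : f.Per ∩ g.Per = ∅) :
    ∃ ℓ : ℕ, 0 < ℓ ∧ ∃ I : ℤ → ℝ × ℝ,
      (∀ k : ℤ, (I k).1 < (I k).2) ∧
      (∀ k : ℤ, (I k).2 ≤ (I (k + 1)).1) ∧
      (∀ k : ℤ, I (k + 2 * (ℓ : ℤ)) = ((I k).1 + 1, (I k).2 + 1)) ∧
      (∀ k : ℤ, Even k → I k ∈ typeInterval f g) ∧
      (∀ k : ℤ, Odd k → I k ∈ typeInterval g f) ∧
      (∀ p ∈ typeInterval f g, ∃ k : ℤ, Even k ∧ I k = p) ∧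
      (∀ p ∈ typeInterval g f, ∃ k : ℤ, Odd k ∧ I k = p) := by
  have hA := AltAux.per_closed f hf
  have hB := AltAux.per_closed g hg
  have hAne := AltAux.per_nonempty f hf
  have hBne := AltAux.per_nonempty g hg
  have hAper : ∀ x ∈ f.Per, ∀ m : ℤ, x + (m : ℝ) ∈ f.Per := fun x hx m =>
    AltAux.per_add_int f hx m
  have hBper : ∀ x ∈ g.Per, ∀ m : ℤ, x + (m : ℝ) ∈ g.Per := fun x hx m =>
    AltAux.per_add_int g hx m
  exact AltAux.main_aux hA hB hAne hBne hdisj hAper hBper
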